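/- A state ρ on H = H_A ⊗ H_B is a separable pure state, i.e. ρ = |ψ^A⟩⟨ψ^A| ⊗ |ψ^B⟩⟨ψ^B| for some unit vectors |ψ^A⟩ ∈ H_A and |ψ^B⟩ ∈ H_B, if and only if its multiset of operator Schmidt coefficients is {1, 0, 0, …, 0}. -/

import Mathlib

open scoped Kronecker ComplexOrder
open Matrix Finset

/-- Hilbert-Schmidt inner product on matrices. -/
noncomputable def hsInner {n : Type*} [Fintype n] (A B : Matrix n n ℂ) : ℂ :=
  (Aᴴ * B).trace

/-- Hilbert-Schmidt norm. -/
noncomputable def hsNorm {n : Type*} [Fintype n] (A : Matrix n n ℂ) : ℝ :=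
  Real.sqrt (hsInner A A).re

/-- A density operator: positive semidefinite with unit trace. -/
def IsDensity {n : Type*} [Fintype n] (ρ : Matrix n n ℂ) : Prop :=
  ρ.PosSemidef ∧ ρ.trace = 1

/-- An operator Schmidt decomposition of a bipartite operator `C`:
`C = ∑ a, μ a • (E a ⊗ₖ F a)` with `μ a ≥ 0` and `E`, `F` orthonormal families
with respect to the Hilbert-Schmidt inner product. -/
def SchmidtDecomp {NA NB : ℕ} (C : Matrix (Fin NA × Fin NB) (Fin NA × Fin NB) ℂ)
    (μ : Fin (min (NA ^ 2) (NB ^ 2)) → ℝ)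
    (E : Fin (min (NA ^ 2) (NB ^ 2)) → Matrix (Fin NA) (Fin NA) ℂ)
    (F : Fin (min (NA ^ 2) (NB ^ 2)) → Matrix (Fin NB) (Fin NB) ℂ) : Prop :=
  (∀ a, 0 ≤ μ a) ∧
  (∀ a b, hsInner (E a) (E b) = if a = b then 1 else 0) ∧
  (∀ a b, hsInner (F a) (F b) = if a = b then 1 else 0) ∧
  C = ∑ a, (μ a : ℂ) • (E a ⊗ₖ F a)

namespace SchmidtAux


lemma hsInner_eq_sum {n : Type*} [Fintype n] (A B : Matrix n n ℂ) :
    hsInner A B = ∑ p : n × n, (starRingEnd ℂ) (A p.1 p.2) * B p.1 p.2 := by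
  rw [hsInner, Matrix.trace]
  simp only [Matrix.diag, Matrix.mul_apply, Matrix.conjTranspose_apply]
  rw [Fintype.sum_prod_type]
  rw [Finset.sum_comm]
  simp [Matrix.star_apply]

lemma hsInner_smul_right {n : Type*} [Fintype n] (c : ℂ) (A B : Matrix n n ℂ) :
    hsInner A (c • B) = c * hsInner A B := by
  simp [hsInner_eq_sum, Finset.mul_sum]; ring_nf
  exact Finset.sum_congr rfl fun p _ => by ring

lemma hsInner_sum_right {n ι : Type*} [Fintype n] (s : Finset ι) (A : Matrix n n ℂ)
    (B : ι → Matrix n n ℂ) :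
    hsInner A (∑ i ∈ s, B i) = ∑ i ∈ s, hsInner A (B i) := by
  simp only [hsInner_eq_sum, Matrix.sum_apply, Finset.mul_sum]
  rw [Finset.sum_comm]

lemma hsInner_smul_left {n : Type*} [Fintype n] (c : ℂ) (A B : Matrix n n ℂ) :
    hsInner (c • A) B = (starRingEnd ℂ) c * hsInner A B := by
  simp [hsInner_eq_sum, Finset.mul_sum]
  exact Finset.sum_congr rfl fun p _ => by ring

lemma hsInner_sum_left {n ι : Type*} [Fintype n] (s : Finset ι) (A : ι → Matrix n n ℂ)
    (B : Matrix n n ℂ) :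
    hsInner (∑ i ∈ s, A i) B = ∑ i ∈ s, hsInner (A i) B := by
  simp only [hsInner_eq_sum, Matrix.sum_apply, map_sum, Finset.sum_mul]
  rw [Finset.sum_comm]

/-- Vectorization into Euclidean space. -/
def toEuc {n : Type*} [Fintype n] (A : Matrix n n ℂ) : EuclideanSpace ℂ (n × n) :=
  WithLp.toLp 2 (fun p => A p.1 p.2)

lemma inner_toEuc {n : Type*} [Fintype n] (A B : Matrix n n ℂ) :
    (inner ℂ (toEuc A) (toEuc B) : ℂ) = hsInner A B := by
  rw [hsInner_eq_sum, PiLp.inner_apply]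
  simp [toEuc, mul_comm]

lemma hsInner_kronecker {m n : Type*} [Fintype m] [Fintype n]
    (A C : Matrix m m ℂ) (B D : Matrix n n ℂ) :
    hsInner (A ⊗ₖ B) (C ⊗ₖ D) = hsInner A C * hsInner B D := by
  simp only [hsInner_eq_sum]
  rw [Finset.sum_mul_sum, ← Finset.sum_product']
  apply Finset.sum_nbij' (fun p => ((p.1.1, p.2.1), (p.1.2, p.2.2)))
    (fun p => ((p.1.1, p.2.1), (p.1.2, p.2.2)))
  all_goals simp [Matrix.kroneckerMap_apply, mul_mul_mul_comm, _root_.map_mul]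

lemma hsInner_vecMulVec_self {n : Type*} [Fintype n] (ψ : n → ℂ) :
    hsInner (Matrix.vecMulVec ψ (star ψ)) (Matrix.vecMulVec ψ (star ψ))
      = (star ψ ⬝ᵥ ψ) * (star ψ ⬝ᵥ ψ) := by
  simp only [hsInner_eq_sum, Matrix.vecMulVec_apply, Pi.star_apply, dotProduct]
  rw [Finset.sum_mul_sum, ← Finset.sum_product']
  apply Finset.sum_congr rfl
  intro p _
  simp [mul_comm, RCLike.star_def, _root_.map_mul]
  ring

lemma key_scalar {d : ℕ} (X Y : Fin d → ℝ) (hX0 : ∀ a, 0 ≤ X a) (hY0 : ∀ a, 0 ≤ Y a)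
    (hX : ∑ a, X a ^ 2 ≤ 1) (hY : ∑ a, Y a ^ 2 ≤ 1) (h : ∑ a, (X a * Y a) ^ 2 = 1) :
    ∃ a₀, X a₀ * Y a₀ = 1 ∧ ∀ a, a ≠ a₀ → X a * Y a = 0 := by
  have hY1 : ∀ a, Y a ^ 2 ≤ 1 := fun a =>
    le_trans (Finset.single_le_sum (fun b _ => sq_nonneg (Y b)) (Finset.mem_univ a)) hY
  have hX1 : ∀ a, X a ^ 2 ≤ 1 := fun a =>
    le_trans (Finset.single_le_sum (fun b _ => sq_nonneg (X b)) (Finset.mem_univ a)) hX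
  have hle : ∀ a, (X a * Y a) ^ 2 ≤ X a ^ 2 := by
    intro a
    rw [mul_pow]
    calc X a ^ 2 * Y a ^ 2 ≤ X a ^ 2 * 1 := by
          exact mul_le_mul_of_nonneg_left (hY1 a) (sq_nonneg _)
      _ = X a ^ 2 := mul_one _
  have hle' : ∀ a, (X a * Y a) ^ 2 ≤ Y a ^ 2 := by
    intro a
    rw [mul_pow]
    calc X a ^ 2 * Y a ^ 2 ≤ 1 * Y a ^ 2 := by
          exact mul_le_mul_of_nonneg_right (hX1 a) (sq_nonneg _)
      _ = Y a ^ 2 := one_mul _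
  have hsumeq : ∑ a, (X a * Y a) ^ 2 = ∑ a, X a ^ 2 :=
    le_antisymm (Finset.sum_le_sum fun a _ => hle a) (by rw [h]; exact hX)
  have hsumeq' : ∑ a, (X a * Y a) ^ 2 = ∑ a, Y a ^ 2 :=
    le_antisymm (Finset.sum_le_sum fun a _ => hle' a) (by rw [h]; exact hY)
  have heqX : ∀ a, (X a * Y a) ^ 2 = X a ^ 2 := by
    intro a
    by_contra hne
    exact absurd hsumeq (ne_of_lt (Finset.sum_lt_sum (fun b _ => hle b)
      ⟨a, Finset.mem_univ a, lt_of_le_of_ne (hle a) hne⟩))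
  have heqY : ∀ a, (X a * Y a) ^ 2 = Y a ^ 2 := by
    intro a
    by_contra hne
    exact absurd hsumeq' (ne_of_lt (Finset.sum_lt_sum (fun b _ => hle' b)
      ⟨a, Finset.mem_univ a, lt_of_le_of_ne (hle' a) hne⟩))
  have hmem : ∀ a, X a * Y a = 0 ∨ X a * Y a = 1 := by
    intro a
    rcases eq_or_ne (X a * Y a) 0 with h0 | h0
    · exact Or.inl h0
    · right
      have hXa : X a ≠ 0 := fun hh => h0 (by rw [hh, zero_mul])
      have hYa : Y a ≠ 0 := fun hh => h0 (by rw [hh, mul_zero])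
      have h1 : Y a ^ 2 = 1 := by
        have hx := heqX a
        rw [mul_pow] at hx
        have hxx : X a ^ 2 * Y a ^ 2 = X a ^ 2 * 1 := by linarith
        exact mul_left_cancel₀ (pow_ne_zero 2 hXa) hxx
      have h2 : X a ^ 2 = 1 := by
        have hx := heqY a
        rw [mul_pow] at hx
        have hxx : Y a ^ 2 * X a ^ 2 = Y a ^ 2 * 1 := by linarith
        exact mul_left_cancel₀ (pow_ne_zero 2 hYa) hxx
      have : X a = 1 := by nlinarith [hX0 a]
      have : Y a = 1 := by nlinarith [hY0 a]
      nlinarith [hX0 a, hY0 a, h1, h2]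
  obtain ⟨a₀, ha₀⟩ : ∃ a₀, X a₀ * Y a₀ = 1 := by
    by_contra hc
    push_neg at hc
    have : ∀ a ∈ Finset.univ, (X a * Y a) ^ 2 = 0 := by
      intro a _
      rcases hmem a with h0 | h1
      · rw [h0]; norm_num
      · exact absurd h1 (hc a)
    rw [Finset.sum_congr rfl this] at h
    simp at h
  refine ⟨a₀, ha₀, ?_⟩
  intro a hne
  rcases hmem a with h0 | h1
  · exact h0
  · exfalso
    have h2 : ({a, a₀} : Finset (Fin d)).sum (fun b => (X b * Y b) ^ 2) = 2 := by
      rw [Finset.sum_pair hne, h1, ha₀]; norm_num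
    have hsub : ({a, a₀} : Finset (Fin d)).sum (fun b => (X b * Y b) ^ 2)
        ≤ ∑ b, (X b * Y b) ^ 2 :=
      Finset.sum_le_sum_of_subset_of_nonneg (Finset.subset_univ _)
        (fun b _ _ => sq_nonneg _)
    rw [h, h2] at hsub
    linarith


/-- Forward direction core. -/
lemma forward_core {NA NB : ℕ} (ψA : Fin NA → ℂ) (ψB : Fin NB → ℂ)
    (hψA : star ψA ⬝ᵥ ψA = 1) (hψB : star ψB ⬝ᵥ ψB = 1)
    (μ : Fin (min (NA ^ 2) (NB ^ 2)) → ℝ)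
    (E : Fin (min (NA ^ 2) (NB ^ 2)) → Matrix (Fin NA) (Fin NA) ℂ)
    (F : Fin (min (NA ^ 2) (NB ^ 2)) → Matrix (Fin NB) (Fin NB) ℂ)
    (hdec : SchmidtDecomp
      (Matrix.vecMulVec ψA (star ψA) ⊗ₖ Matrix.vecMulVec ψB (star ψB)) μ E F) :
    ∃ a₀, μ a₀ = 1 ∧ ∀ a, a ≠ a₀ → μ a = 0 := by
  obtain ⟨hμ0, hE, hF, hsum⟩ := hdec
  set X := Matrix.vecMulVec ψA (star ψA) with hXdef
  set Y := Matrix.vecMulVec ψB (star ψB) with hYdef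
  have hXX : hsInner X X = 1 := by
    rw [hsInner_vecMulVec_self, hψA, mul_one]
  have hYY : hsInner Y Y = 1 := by
    rw [hsInner_vecMulVec_self, hψB, mul_one]
  -- orthonormality of products
  have hG : ∀ a b, hsInner (E a ⊗ₖ F a) (E b ⊗ₖ F b) = if a = b then 1 else 0 := by
    intro a b
    rw [hsInner_kronecker, hE, hF]
    by_cases h : a = b <;> simp [h]
  -- coefficient extraction
  have coef : ∀ a, (μ a : ℂ) = hsInner (E a) X * hsInner (F a) Y := by
    intro a
    have h1 : hsInner (E a ⊗ₖ F a) (X ⊗ₖ Y) = hsInner (E a) X * hsInner (F a) Y :=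
      hsInner_kronecker _ _ _ _
    have h2 : hsInner (E a ⊗ₖ F a) (X ⊗ₖ Y) = (μ a : ℂ) := by
      rw [hsum, hsInner_sum_right]
      simp only [hsInner_smul_right, hG]
      simp
    rw [← h2, h1]
  -- sum of squares is 1
  have sumsq : ∑ a, μ a ^ 2 = 1 := by
    have h1 : hsInner (X ⊗ₖ Y) (X ⊗ₖ Y) = 1 := by
      rw [hsInner_kronecker, hXX, hYY, mul_one]
    have h2 : hsInner (X ⊗ₖ Y) (X ⊗ₖ Y) = ∑ a, ((μ a : ℂ)) ^ 2 := by
      conv_lhs => rw [hsum, hsInner_sum_left]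
      apply Finset.sum_congr rfl
      intro a _
      rw [hsInner_smul_left, hsInner_sum_right]
      simp only [hsInner_smul_right, hG]
      simp [Complex.conj_ofReal]
      ring
    rw [h1] at h2
    have := h2.symm
    push_cast at this
    exact_mod_cast this
  -- Bessel
  have hortE : Orthonormal ℂ (fun a => toEuc (E a)) := by
    rw [orthonormal_iff_ite]
    intro a b
    rw [inner_toEuc, hE]
  have hortF : Orthonormal ℂ (fun a => toEuc (F a)) := by
    rw [orthonormal_iff_ite]
    intro a b
    rw [inner_toEuc, hF]
  have hnormX : ‖toEuc X‖ ^ 2 = 1 := by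
    rw [← inner_self_eq_norm_sq (𝕜 := ℂ), inner_toEuc, hXX]
    simp
  have hnormY : ‖toEuc Y‖ ^ 2 = 1 := by
    rw [← inner_self_eq_norm_sq (𝕜 := ℂ), inner_toEuc, hYY]
    simp
  have besselX : ∑ a, ‖hsInner (E a) X‖ ^ 2 ≤ 1 := by
    have := hortE.sum_inner_products_le (toEuc X) (s := Finset.univ)
    rw [hnormX] at this
    simpa only [inner_toEuc] using this
  have besselY : ∑ a, ‖hsInner (F a) Y‖ ^ 2 ≤ 1 := by
    have := hortF.sum_inner_products_le (toEuc Y) (s := Finset.univ)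
    rw [hnormY] at this
    simpa only [inner_toEuc] using this
  -- μ a = ‖x a‖ * ‖y a‖
  have hprod : ∀ a, μ a = ‖hsInner (E a) X‖ * ‖hsInner (F a) Y‖ := by
    intro a
    have h1 : ‖(μ a : ℂ)‖ = ‖hsInner (E a) X‖ * ‖hsInner (F a) Y‖ := by
      rw [coef a, norm_mul]
    rw [Complex.norm_real, Real.norm_of_nonneg (hμ0 a)] at h1
    exact h1
  have hsq : ∑ a, (‖hsInner (E a) X‖ * ‖hsInner (F a) Y‖) ^ 2 = 1 := by
    rw [← sumsq]
    exact Finset.sum_congr rfl fun a _ => by rw [← hprod a]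
  obtain ⟨a₀, h1, h0⟩ := key_scalar (fun a => ‖hsInner (E a) X‖)
    (fun a => ‖hsInner (F a) Y‖) (fun a => norm_nonneg _) (fun a => norm_nonneg _)
    besselX besselY hsq
  exact ⟨a₀, by rw [hprod a₀]; exact h1, fun a ha => by rw [hprod a]; exact h0 a ha⟩

lemma map_indicator_multiset {d : ℕ} (f : Fin d → ℝ) (a₀ : Fin d) (h1 : f a₀ = 1)
    (h0 : ∀ a, a ≠ a₀ → f a = 0) :
    Multiset.map f Finset.univ.val = (1 : ℝ) ::ₘ Multiset.replicate (d - 1) (0 : ℝ) := by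
  have hval : (Finset.univ : Finset (Fin d)).val
      = a₀ ::ₘ (Finset.univ.erase a₀).val := by
    conv_lhs => rw [← Finset.insert_erase (Finset.mem_univ a₀)]
    rw [Finset.insert_val]
    exact Multiset.ndinsert_of_notMem Finset.univ.nodup.notMem_erase
  rw [hval, Multiset.map_cons, h1]
  congr 1
  rw [Multiset.eq_replicate]
  constructor
  · rw [Multiset.card_map]
    have : (Finset.univ.erase a₀).card = d - 1 := by
      simp [Finset.card_erase_of_mem]
    exact this
  · intro b hb
    obtain ⟨a, ha, rfl⟩ := Multiset.mem_map.mp hb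
    exact h0 a (Finset.ne_of_mem_erase (Finset.mem_val.mp ha))

lemma indicator_of_multiset {d : ℕ} (f : Fin d → ℝ)
    (h : Multiset.map f Finset.univ.val = (1 : ℝ) ::ₘ Multiset.replicate (d - 1) (0 : ℝ)) :
    ∃ a₀, f a₀ = 1 ∧ ∀ a, a ≠ a₀ → f a = 0 := by
  have h1 : (1 : ℝ) ∈ Multiset.map f Finset.univ.val := by
    rw [h]; exact Multiset.mem_cons_self _ _
  obtain ⟨a₀, _, ha₀⟩ := Multiset.mem_map.mp h1
  refine ⟨a₀, ha₀, ?_⟩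
  intro a hne
  have hfa : f a ∈ Multiset.map f Finset.univ.val :=
    Multiset.mem_map_of_mem f (Finset.mem_univ a : a ∈ Finset.univ)
  rw [h] at hfa
  rcases Multiset.mem_cons.mp hfa with h1' | h0'
  · exfalso
    -- count of 1 in the map is at least 2
    have hmem : a ∈ (Finset.univ.val.erase a₀) :=
      (Multiset.mem_erase_of_ne hne).mpr (Finset.mem_univ a)
    have hcons : Finset.univ.val = a₀ ::ₘ (Finset.univ.val.erase a₀) :=
      (Multiset.cons_erase (Finset.mem_univ a₀ : a₀ ∈ Finset.univ)).symm
    have hcons2 : ∃ t, Finset.univ.val.erase a₀ = a ::ₘ t :=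
      ⟨(Finset.univ.val.erase a₀).erase a, (Multiset.cons_erase hmem).symm⟩
    obtain ⟨t, ht⟩ := hcons2
    have hcount : 2 ≤ Multiset.count (1:ℝ) (Multiset.map f Finset.univ.val) := by
      rw [hcons, ht, Multiset.map_cons, Multiset.map_cons, ha₀, h1']
      simp [Multiset.count_cons_self]
    rw [h] at hcount
    rw [Multiset.count_cons_self, Multiset.count_replicate] at hcount
    norm_num at hcount
  · exact Multiset.eq_of_mem_replicate h0'



lemma inner_euc {α : Type*} [Fintype α] (x y : EuclideanSpace ℂ α) :
    (inner ℂ x y : ℂ) = star (x : α → ℂ) ⬝ᵥ (y : α → ℂ) := by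
  rw [EuclideanSpace.inner_eq_star_dotProduct, dotProduct_comm]

/-- Extend a partially-defined orthonormal family to a full orthonormal family. -/
lemma extend_orthonormal {d n : ℕ} (hdn : d ≤ n)
    {α : Type*} [Fintype α] [DecidableEq α] (hcard : Fintype.card α = n)
    (f : Fin d → EuclideanSpace ℂ α) (s : Finset (Fin d))
    (hf : ∀ i ∈ s, ∀ j ∈ s, (inner ℂ (f i) (f j) : ℂ) = if i = j then 1 else 0) :
    ∃ g : Fin d → EuclideanSpace ℂ α, Orthonormal ℂ g ∧ ∀ i ∈ s, g i = f i := by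
  classical
  set v' : Fin n → EuclideanSpace ℂ α :=
    fun i => if h : (i : ℕ) < d then f ⟨(i : ℕ), h⟩ else 0 with hv'
  set s' : Set (Fin n) := {i | ∃ h : (i : ℕ) < d, (⟨(i : ℕ), h⟩ : Fin d) ∈ s} with hs'
  have hv'mem : ∀ (i : Fin n) (h : (i : ℕ) < d), v' i = f ⟨(i : ℕ), h⟩ := by
    intro i h
    simp only [hv', dif_pos h]
  have horth : Orthonormal ℂ (s'.restrict v') := by
    rw [orthonormal_iff_ite]
    rintro ⟨i, hid, his⟩ ⟨j, hjd, hjs⟩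
    show inner ℂ (v' i) (v' j) = _
    rw [hv'mem i hid, hv'mem j hjd, hf _ his _ hjs]
    by_cases h : i = j
    · subst h
      simp
    · have h1 : (⟨(i : ℕ), hid⟩ : Fin d) ≠ ⟨(j : ℕ), hjd⟩ := by
        intro hc
        exact h (Fin.val_injective (show ((i:ℕ)) = ((j:ℕ)) from congrArg (fun x : Fin d => (x : ℕ)) hc))
      have h2 : (⟨i, ⟨hid, his⟩⟩ : s') ≠ ⟨j, ⟨hjd, hjs⟩⟩ := by
        intro hc
        exact h (congrArg Subtype.val hc)
      rw [if_neg h1, if_neg h2]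
  obtain ⟨b, hb⟩ := horth.exists_orthonormalBasis_extension_of_card_eq
    (by rw [finrank_euclideanSpace, hcard, Fintype.card_fin])
  refine ⟨fun i => b (Fin.castLE hdn i), ?_, ?_⟩
  · exact b.orthonormal.comp _ (Fin.castLE_injective hdn)
  · intro i hi
    have hmem : (Fin.castLE hdn i) ∈ s' := ⟨by simpa using i.isLt, by simpa using hi⟩
    show b (Fin.castLE hdn i) = f i
    rw [hb _ hmem, hv'mem _ (by simpa using i.isLt)]
    congr 1

/-- Existence of a singular value decomposition with `d ≥ min(m,n)` terms. -/
lemma svd_exists {α β : Type*} [Fintype α] [Fintype β] [DecidableEq α] [DecidableEq β]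
    (R : Matrix α β ℂ) (d : ℕ) (hdα : d ≤ Fintype.card α) (hdβ : d ≤ Fintype.card β)
    (hmin : min (Fintype.card α) (Fintype.card β) ≤ d) :
    ∃ (μ : Fin d → ℝ) (u : Fin d → (α → ℂ)) (v : Fin d → (β → ℂ)),
      (∀ a, 0 ≤ μ a) ∧
      (∀ a b, star (u a) ⬝ᵥ u b = if a = b then 1 else 0) ∧
      (∀ a b, star (v a) ⬝ᵥ v b = if a = b then 1 else 0) ∧
      R = ∑ a, (μ a : ℂ) • Matrix.vecMulVec (u a) (star (v a)) := by
  classical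
  have hpsd : (Rᴴ * R).PosSemidef := Matrix.posSemidef_conjTranspose_mul_self R
  have hG : (Rᴴ * R).IsHermitian := hpsd.1
  set b := hG.eigenvectorBasis with hbdef
  set lam := hG.eigenvalues with hlamdef
  have hlam0 : ∀ i, 0 ≤ lam i := hpsd.eigenvalues_nonneg
  -- key inner product computation
  have key : ∀ i j : β, star (R *ᵥ ⇑(b i)) ⬝ᵥ (R *ᵥ ⇑(b j))
      = (lam j : ℂ) * (if i = j then 1 else 0) := by
    intro i j
    have h1 : star (⇑(b i)) ⬝ᵥ (⇑(b j)) = if i = j then 1 else 0 := by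
      have h := orthonormal_iff_ite.mp b.orthonormal i j
      rw [EuclideanSpace.inner_eq_star_dotProduct, dotProduct_comm] at h
      exact h
    rw [Matrix.star_mulVec, ← Matrix.dotProduct_mulVec, Matrix.mulVec_mulVec,
      hG.mulVec_eigenvectorBasis]
    rw [dotProduct_smul, h1, Complex.real_smul]
  -- vanishing of R on kernel eigenvectors
  have hRv0 : ∀ i, lam i = 0 → R *ᵥ ⇑(b i) = 0 := by
    intro i h0
    have h := key i i
    rw [if_pos rfl, h0, mul_one] at h
    exact dotProduct_star_self_eq_zero.mp (by rw [h]; norm_num)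
  -- the支 support of the spectrum
  set S : Finset β := Finset.univ.filter (fun i => lam i ≠ 0) with hSdef
  have hlamS : ∀ i : β, i ∉ S → lam i = 0 := by
    intro i hi
    by_contra h
    exact hi (Finset.mem_filter.mpr ⟨Finset.mem_univ i, h⟩)
  -- an orthonormal family indexed by S in the α-space
  have hSorth : Orthonormal ℂ (fun i : S =>
      (((Real.sqrt (lam (i : β)))⁻¹ : ℝ) : ℂ) •
        (WithLp.equiv 2 (α → ℂ)).symm (R *ᵥ ⇑(b (i : β)))) := by
    rw [orthonormal_iff_ite]
    intro i j
    rw [inner_smul_left, inner_smul_right, EuclideanSpace.inner_eq_star_dotProduct, dotProduct_comm]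
    simp only [Equiv.apply_symm_apply, WithLp.equiv_symm_apply, WithLp.ofLp_toLp]
    rw [key (i : β) (j : β)]
    have hSi := (Finset.mem_filter.mp i.2).2
    have hSj := (Finset.mem_filter.mp j.2).2
    by_cases h : i = j
    · subst h
      rw [if_pos rfl, if_pos rfl, Complex.conj_ofReal, mul_one]
      rw [← Complex.ofReal_mul, ← Complex.ofReal_mul]
      norm_cast
      have hlt : 0 < lam (i : β) := lt_of_le_of_ne (hlam0 _) (Ne.symm hSi)
      have hsne : Real.sqrt (lam (i : β)) ≠ 0 := ne_of_gt (Real.sqrt_pos.mpr hlt)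
      field_simp
      rw [Real.sq_sqrt (hlam0 _)]
    · have hne : (i : β) ≠ (j : β) := fun hc => h (Subtype.ext hc)
      rw [if_neg hne, if_neg h]
      ring
  -- cardinality bounds
  have hcardS : S.card ≤ Fintype.card α := by
    have hli := hSorth.linearIndependent
    have hc := hli.fintype_card_le_finrank
    rwa [finrank_euclideanSpace, Fintype.card_coe] at hc
  have hScard_le : S.card ≤ d :=
    le_trans (le_min hcardS (Finset.card_le_univ S)) hmin
  obtain ⟨T, hST, hTuniv, hTcard⟩ := Finset.exists_subsuperset_card_eq
    (Finset.subset_univ S) hScard_le (by rw [Finset.card_univ]; exact hdβ)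
  set e : ↥T ≃ Fin d := Finset.equivFinOfCardEq hTcard with hedef
  set vv : Fin d → (β → ℂ) := fun a => ⇑(b ((e.symm a) : β)) with hvv
  set μv : Fin d → ℝ := fun a => Real.sqrt (lam ((e.symm a) : β)) with hμv
  have hμv0 : ∀ a, 0 ≤ μv a := fun a => Real.sqrt_nonneg _
  have hvvorth : ∀ a c, star (vv a) ⬝ᵥ vv c = if a = c then 1 else 0 := by
    intro a c
    have h := orthonormal_iff_ite.mp b.orthonormal ((e.symm a) : β) ((e.symm c) : β)
    rw [EuclideanSpace.inner_eq_star_dotProduct, dotProduct_comm] at h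
    by_cases hac : a = c
    · subst hac
      rw [if_pos rfl]
      rw [if_pos rfl] at h
      exact h
    · rw [if_neg hac]
      rw [if_neg (fun hc => hac (e.symm.injective (Subtype.ext hc)))] at h
      exact h
  -- construct u by extension
  set sA : Finset (Fin d) := Finset.univ.filter (fun a => lam ((e.symm a) : β) ≠ 0) with hsA
  set fA : Fin d → EuclideanSpace ℂ α := fun a =>
    (((μv a)⁻¹ : ℝ) : ℂ) • (WithLp.equiv 2 (α → ℂ)).symm (R *ᵥ vv a) with hfA
  have hfAorth : ∀ i ∈ sA, ∀ j ∈ sA, (inner ℂ (fA i) (fA j) : ℂ) = if i = j then 1 else 0 := by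
    intro i hi j hj
    have hSi := (Finset.mem_filter.mp hi).2
    have hSj := (Finset.mem_filter.mp hj).2
    rw [hfA]
    simp only []
    rw [inner_smul_left, inner_smul_right, EuclideanSpace.inner_eq_star_dotProduct, dotProduct_comm]
    simp only [Equiv.apply_symm_apply, WithLp.equiv_symm_apply, WithLp.ofLp_toLp]
    rw [hvv]
    simp only []
    rw [key ((e.symm i) : β) ((e.symm j) : β)]
    by_cases h : i = j
    · subst h
      rw [if_pos rfl, if_pos rfl, Complex.conj_ofReal, mul_one, hμv]
      simp only []
      rw [← Complex.ofReal_mul, ← Complex.ofReal_mul]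
      norm_cast
      have hlt : 0 < lam ((e.symm i) : β) := lt_of_le_of_ne (hlam0 _) (Ne.symm hSj)
      have hsne : Real.sqrt (lam ((e.symm i) : β)) ≠ 0 := ne_of_gt (Real.sqrt_pos.mpr hlt)
      field_simp
      rw [Real.sq_sqrt (hlam0 _)]
    · rw [if_neg (fun hc => h (e.symm.injective (Subtype.ext hc))), if_neg h]
      ring
  obtain ⟨g, hgorth, hgf⟩ := extend_orthonormal hdα rfl fA sA hfAorth
  refine ⟨μv, fun a => WithLp.equiv 2 (α → ℂ) (g a), vv, hμv0, ?_, hvvorth, ?_⟩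
  · intro a c
    have h := orthonormal_iff_ite.mp hgorth a c
    rw [EuclideanSpace.inner_eq_star_dotProduct, dotProduct_comm] at h
    exact h
  -- reconstruction
  · have hcomplete : ∀ k y : β, (∑ i, ⇑(b i) k * (starRingEnd ℂ) (⇑(b i) y))
        = if k = y then 1 else 0 := by
      intro k y
      have h := b.sum_inner_mul_inner (EuclideanSpace.single k 1) (EuclideanSpace.single y 1)
      simp only [EuclideanSpace.inner_single_left, EuclideanSpace.inner_single_right,
        _root_.map_one, one_mul, mul_one] at h
      show (∑ i, (b i) k * (starRingEnd ℂ) ((b i) y)) = _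
      rw [h]
      simp only [EuclideanSpace.single_apply, apply_ite (starRingEnd ℂ), _root_.map_one, map_zero]
      by_cases hky : k = y
      · simp [hky]
      · rw [if_neg hky, if_neg (Ne.symm hky)]
    have hrecon : R = ∑ i : β, Matrix.vecMulVec (R *ᵥ ⇑(b i)) (star ⇑(b i)) := by
      ext x y
      rw [Matrix.sum_apply]
      simp only [Matrix.vecMulVec_apply, Pi.star_apply, Matrix.mulVec, dotProduct,
        RCLike.star_def]
      calc R x y = ∑ k, R x k * (if k = y then 1 else 0) := by
            simp
        _ = ∑ k, R x k * (∑ i, ⇑(b i) k * (starRingEnd ℂ) (⇑(b i) y)) := by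
            apply Finset.sum_congr rfl
            intro k _
            rw [hcomplete k y]
        _ = ∑ i, (∑ k, R x k * ⇑(b i) k) * (starRingEnd ℂ) (⇑(b i) y) := by
            simp only [Finset.mul_sum, Finset.sum_mul]
            rw [Finset.sum_comm]
            apply Finset.sum_congr rfl
            intro i _
            apply Finset.sum_congr rfl
            intro k _
            ring
    have hzero : ∀ i ∈ Finset.univ, i ∉ T →
        Matrix.vecMulVec (R *ᵥ ⇑(b i)) (star ⇑(b i)) = 0 := by
      intro i _ hiT
      have h0 : lam i = 0 := hlamS i (fun hiS => hiT (hST hiS))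
      rw [hRv0 i h0]
      ext x y
      simp [Matrix.vecMulVec_apply]
    have hsplit : R = ∑ i ∈ T, Matrix.vecMulVec (R *ᵥ ⇑(b i)) (star ⇑(b i)) :=
      hrecon.trans (Finset.sum_subset hTuniv hzero).symm
    rw [hsplit, ← Finset.sum_attach T (fun i => Matrix.vecMulVec (R *ᵥ ⇑(b i)) (star ⇑(b i))),
      ← Finset.univ_eq_attach, ← Equiv.sum_comp e.symm]
    apply Finset.sum_congr rfl
    intro a _
    by_cases hl : lam ((e.symm a) : β) = 0
    · have h1 : R *ᵥ vv a = 0 := hRv0 _ hl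
      have h2 : μv a = 0 := by rw [hμv]; simp [hl]
      rw [hvv] at h1 ⊢
      simp only [] at h1 ⊢
      rw [h1, h2]
      ext x y
      simp [Matrix.vecMulVec_apply]
    · have haA : a ∈ sA := Finset.mem_filter.mpr ⟨Finset.mem_univ a, hl⟩
      have hga : g a = fA a := hgf a haA
      have hμne : (μv a : ℝ) ≠ 0 := by
        rw [hμv]
        simp only []
        exact Real.sqrt_ne_zero'.mpr (lt_of_le_of_ne (hlam0 _) (Ne.symm hl))
      have hgax : ∀ x, g a x = (((μv a)⁻¹ : ℝ) : ℂ) * (R *ᵥ vv a) x := by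
        intro x
        rw [hga, hfA]
        rfl
      ext x y
      simp only [Matrix.smul_apply, Matrix.vecMulVec_apply, Pi.smul_apply, smul_eq_mul]
      rw [show (WithLp.equiv 2 (α → ℂ)) (g a) x = g a x from rfl, hgax x]
      have hμC : ((μv a : ℝ) : ℂ) ≠ 0 := by exact_mod_cast hμne
      field_simp
      push_cast
      rw [mul_one_div_cancel hμC, one_mul]



lemma eig_indicator {m : Type*} [Fintype m] [DecidableEq m] (l : m → ℝ)
    (h0 : ∀ i, 0 ≤ l i) (h1 : ∑ i, l i = 1) (h2 : ∑ i, l i ^ 2 = 1) :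
    ∃ k₀, l k₀ = 1 ∧ ∀ k, k ≠ k₀ → l k = 0 := by
  have hle1 : ∀ i, l i ≤ 1 := by
    intro i
    rw [← h1]
    exact Finset.single_le_sum (fun j _ => h0 j) (Finset.mem_univ i)
  have hsqle : ∀ i, l i ^ 2 ≤ l i := by
    intro i
    nlinarith [h0 i, hle1 i]
  have heq : ∀ i, l i ^ 2 = l i := by
    intro i
    by_contra hne
    have : ∑ j, l j ^ 2 < ∑ j, l j :=
      Finset.sum_lt_sum (fun j _ => hsqle j)
        ⟨i, Finset.mem_univ i, lt_of_le_of_ne (hsqle i) hne⟩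
    rw [h1, h2] at this
    exact lt_irrefl 1 this
  have hmem : ∀ i, l i = 0 ∨ l i = 1 := by
    intro i
    have h := heq i
    have : l i * (l i - 1) = 0 := by nlinarith [h]
    rcases mul_eq_zero.mp this with h' | h'
    · exact Or.inl h'
    · exact Or.inr (by linarith)
  obtain ⟨k₀, hk₀⟩ : ∃ k₀, l k₀ = 1 := by
    by_contra hc
    push_neg at hc
    have : ∀ i ∈ Finset.univ, l i = 0 := by
      intro i _
      rcases hmem i with h' | h'
      · exact h'
      · exact absurd h' (hc i)
    rw [Finset.sum_congr rfl this] at h1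
    simp at h1
  refine ⟨k₀, hk₀, ?_⟩
  intro k hk
  rcases hmem k with h' | h'
  · exact h'
  · exfalso
    have hs : ({k, k₀} : Finset m).sum l = 2 := by
      rw [Finset.sum_pair hk, h', hk₀]; norm_num
    have hsub : ({k, k₀} : Finset m).sum l ≤ ∑ i, l i :=
      Finset.sum_le_sum_of_subset_of_nonneg (Finset.subset_univ _) (fun i _ _ => h0 i)
    rw [h1, hs] at hsub
    linarith

/-- A PSD matrix with unit trace and unit HS-norm is a pure state. -/
lemma pure_of_psd {m : Type*} [Fintype m] [DecidableEq m] (ρ : Matrix m m ℂ)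
    (hpsd : ρ.PosSemidef) (htr : ρ.trace = 1) (hhs : hsInner ρ ρ = 1) :
    ∃ w : m → ℂ, star w ⬝ᵥ w = 1 ∧ ρ = Matrix.vecMulVec w (star w) := by
  classical
  have hH : ρ.IsHermitian := hpsd.1
  set lam := hH.eigenvalues with hlam
  set U : Matrix m m ℂ := (Matrix.IsHermitian.eigenvectorUnitary hH : Matrix m m ℂ) with hU
  have hspec : ρ = U * Matrix.diagonal (RCLike.ofReal ∘ lam) * Uᴴ := by
    have := hH.spectral_theorem
    rw [Unitary.conjStarAlgAut_apply] at this
    exact this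
  have hUU : Uᴴ * U = 1 := by
    have := (Matrix.IsHermitian.eigenvectorUnitary hH).2
    rw [Matrix.mem_unitaryGroup_iff'] at this
    exact this
  have hUU' : U * Uᴴ = 1 := by
    have := (Matrix.IsHermitian.eigenvectorUnitary hH).2
    rw [Matrix.mem_unitaryGroup_iff] at this
    exact this
  have hlam0 : ∀ i, 0 ≤ lam i := hpsd.eigenvalues_nonneg
  -- trace = sum of eigenvalues
  have htr_sum : ∑ i, lam i = 1 := by
    have h1 : ρ.trace = ∑ i, (lam i : ℂ) := by
      rw [hspec, Matrix.trace_mul_cycle, hUU, Matrix.one_mul, Matrix.trace_diagonal]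
      rfl
    rw [htr] at h1
    have := h1.symm
    push_cast at this
    exact_mod_cast this
  -- HS norm = sum of squared eigenvalues
  have hsq_sum : ∑ i, lam i ^ 2 = 1 := by
    have hρρ : hsInner ρ ρ = (ρ * ρ).trace := by
      rw [hsInner, hH.eq]
    have h2 : ρ * ρ = U * Matrix.diagonal ((RCLike.ofReal ∘ lam) * (RCLike.ofReal ∘ lam)) * Uᴴ := by
      rw [hspec]
      calc U * Matrix.diagonal (RCLike.ofReal ∘ lam) * Uᴴ *
            (U * Matrix.diagonal (RCLike.ofReal ∘ lam) * Uᴴ)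
          = U * Matrix.diagonal (RCLike.ofReal ∘ lam) * (Uᴴ * U) *
            Matrix.diagonal (RCLike.ofReal ∘ lam) * Uᴴ := by
            simp only [Matrix.mul_assoc]
        _ = U * (Matrix.diagonal (RCLike.ofReal ∘ lam) * Matrix.diagonal (RCLike.ofReal ∘ lam)) * Uᴴ := by
            rw [hUU]
            simp only [Matrix.mul_assoc, Matrix.one_mul]
        _ = _ := by rw [Matrix.diagonal_mul_diagonal]; rfl
    have h3 : (ρ * ρ).trace = ∑ i, ((lam i : ℂ)) ^ 2 := by
      rw [h2, Matrix.trace_mul_cycle, hUU, Matrix.one_mul, Matrix.trace_diagonal]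
      apply Finset.sum_congr rfl
      intro i _
      simp [sq]
    rw [hρρ, h3] at hhs
    have := hhs
    push_cast at this
    exact_mod_cast this
  obtain ⟨k₀, hk₀, hk0⟩ := eig_indicator lam hlam0 htr_sum hsq_sum
  refine ⟨fun i => U i k₀, ?_, ?_⟩
  · have h := congrFun (congrFun hUU k₀) k₀
    rw [Matrix.mul_apply] at h
    simp only [Matrix.one_apply_eq] at h
    rw [← h]
    simp [dotProduct, Matrix.conjTranspose_apply]
  · rw [hspec]
    ext i j
    rw [Matrix.mul_apply, Matrix.vecMulVec_apply]
    have : ∀ k, ((U * Matrix.diagonal (RCLike.ofReal ∘ lam) : Matrix m m ℂ)) i k * Uᴴ k j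
        = (if k = k₀ then U i k₀ * (starRingEnd ℂ) (U j k₀) else 0) := by
      intro k
      rw [Matrix.mul_apply]
      rw [Finset.sum_eq_single k]
      · by_cases hk : k = k₀
        · subst hk
          rw [Matrix.diagonal_apply_eq, if_pos rfl]
          simp [hk₀, Matrix.conjTranspose_apply]
        · rw [Matrix.diagonal_apply_eq, if_neg hk]
          have : lam k = 0 := hk0 k hk
          simp [this]
      · intro b _ hb
        rw [Matrix.diagonal_apply_ne _ hb]
        simp
      · intro hb
        exact absurd (Finset.mem_univ k) hb
    rw [Finset.sum_congr rfl (fun k _ => this k)]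
    rw [Finset.sum_ite_eq' Finset.univ k₀ (fun _ => U i k₀ * (starRingEnd ℂ) (U j k₀))]
    simp [Pi.star_apply, RCLike.star_def]

/-- a pure product operator gives product unit vectors -/
lemma product_of_pure {NA NB : ℕ} (w : Fin NA × Fin NB → ℂ) (hw : star w ⬝ᵥ w = 1)
    (Ea : Matrix (Fin NA) (Fin NA) ℂ) (Fa : Matrix (Fin NB) (Fin NB) ℂ)
    (hfac : Matrix.vecMulVec w (star w) = Ea ⊗ₖ Fa) :
    ∃ (ψA : Fin NA → ℂ) (ψB : Fin NB → ℂ),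
      star ψA ⬝ᵥ ψA = 1 ∧ star ψB ⬝ᵥ ψB = 1 ∧
      Matrix.vecMulVec w (star w)
        = Matrix.vecMulVec ψA (star ψA) ⊗ₖ Matrix.vecMulVec ψB (star ψB) := by
  classical
  -- a nonvanishing coordinate
  obtain ⟨p₀, hp₀⟩ : ∃ p, w p ≠ 0 := by
    by_contra hc
    push_neg at hc
    have : star w ⬝ᵥ w = 0 := by
      simp [dotProduct, hc]
    rw [this] at hw
    exact zero_ne_one hw
  obtain ⟨i₀, k₀⟩ := p₀
  set c := w (i₀, k₀) with hc
  have key : ∀ i k j l, w (i, k) * (starRingEnd ℂ) (w (j, l)) = Ea i j * Fa k l := by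
    intro i k j l
    have := congrFun (congrFun hfac (i, k)) (j, l)
    simpa [Matrix.vecMulVec_apply, Matrix.kroneckerMap_apply, Pi.star_apply,
      RCLike.star_def] using this
  have claim : ∀ i k, w (i, k) * c = w (i, k₀) * w (i₀, k) := by
    intro i k
    have hA := key i k₀ i₀ k₀
    have hB := key i₀ k i₀ k₀
    have hC := key i k i₀ k₀
    have hD := key i₀ k₀ i₀ k₀
    have hcc : (starRingEnd ℂ) c ≠ 0 := by
      simpa using hp₀
    have hmul : (w (i, k₀) * (starRingEnd ℂ) c) * (w (i₀, k) * (starRingEnd ℂ) c)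
        = (w (i, k) * (starRingEnd ℂ) c) * (c * (starRingEnd ℂ) c) := by
      rw [hA, hB, hC, hD]
      ring
    have := mul_right_cancel₀ hcc (by
      have h2 : (w (i, k₀) * w (i₀, k)) * ((starRingEnd ℂ) c * (starRingEnd ℂ) c)
          = (w (i, k) * c) * ((starRingEnd ℂ) c * (starRingEnd ℂ) c) := by
        calc (w (i, k₀) * w (i₀, k)) * ((starRingEnd ℂ) c * (starRingEnd ℂ) c)
            = (w (i, k₀) * (starRingEnd ℂ) c) * (w (i₀, k) * (starRingEnd ℂ) c) := by ring
          _ = (w (i, k) * (starRingEnd ℂ) c) * (c * (starRingEnd ℂ) c) := hmul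
          _ = (w (i, k) * c) * ((starRingEnd ℂ) c * (starRingEnd ℂ) c) := by ring
      exact mul_right_cancel₀ hcc (by
        calc (w (i, k₀) * w (i₀, k)) * (starRingEnd ℂ) c * (starRingEnd ℂ) c
            = (w (i, k₀) * w (i₀, k)) * ((starRingEnd ℂ) c * (starRingEnd ℂ) c) := by ring
          _ = (w (i, k) * c) * ((starRingEnd ℂ) c * (starRingEnd ℂ) c) := h2
          _ = (w (i, k) * c) * (starRingEnd ℂ) c * (starRingEnd ℂ) c := by ring))
    linear_combination -this
  set ψ : Fin NA → ℂ := fun i => w (i, k₀) with hψ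
  set φ : Fin NB → ℂ := fun k => w (i₀, k) * c⁻¹ with hφ
  have hcne : c ≠ 0 := hp₀
  have hfact : ∀ i k, w (i, k) = ψ i * φ k := by
    intro i k
    rw [hψ, hφ]
    simp only []
    field_simp
    linear_combination claim i k
  -- split the normalization
  have hsplitdot : (star ψ ⬝ᵥ ψ) * (star φ ⬝ᵥ φ) = 1 := by
    rw [← hw]
    have h1 : star w ⬝ᵥ w = ∑ p : Fin NA × Fin NB, (starRingEnd ℂ) (w p) * w p := by
      simp [dotProduct, Pi.star_apply, RCLike.star_def]
    have h2 : star ψ ⬝ᵥ ψ = ∑ i, (starRingEnd ℂ) (ψ i) * ψ i := by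
      simp [dotProduct, Pi.star_apply, RCLike.star_def]
    have h3 : star φ ⬝ᵥ φ = ∑ k, (starRingEnd ℂ) (φ k) * φ k := by
      simp [dotProduct, Pi.star_apply, RCLike.star_def]
    rw [h1, h2, h3, Finset.sum_mul_sum, ← Finset.sum_product']
    apply Finset.sum_congr rfl
    intro p _
    rw [show w p = ψ p.1 * φ p.2 from hfact p.1 p.2]
    simp only [_root_.map_mul]
    ring
  -- real normalizations
  set nψ : ℝ := ∑ i, Complex.normSq (ψ i) with hnψ
  set nφ : ℝ := ∑ k, Complex.normSq (φ k) with hnφ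
  have hψdot : star ψ ⬝ᵥ ψ = (nψ : ℂ) := by
    rw [hnψ]
    push_cast
    simp [dotProduct, Pi.star_apply, RCLike.star_def,
      Complex.normSq_eq_conj_mul_self]
  have hφdot : star φ ⬝ᵥ φ = (nφ : ℂ) := by
    rw [hnφ]
    push_cast
    simp [dotProduct, Pi.star_apply, RCLike.star_def,
      Complex.normSq_eq_conj_mul_self]
  have hnn : nψ * nφ = 1 := by
    have := hsplitdot
    rw [hψdot, hφdot, ← Complex.ofReal_mul] at this
    exact_mod_cast this
  have hnψ0 : 0 ≤ nψ := Finset.sum_nonneg fun i _ => Complex.normSq_nonneg _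
  have hnφ0 : 0 ≤ nφ := Finset.sum_nonneg fun i _ => Complex.normSq_nonneg _
  have hnψpos : 0 < nψ := by
    rcases lt_or_eq_of_le hnψ0 with h | h
    · exact h
    · exfalso; rw [← h] at hnn; simp at hnn
  have hnφpos : 0 < nφ := by
    rcases lt_or_eq_of_le hnφ0 with h | h
    · exact h
    · exfalso; rw [← h] at hnn; simp at hnn
  set rψ : ℝ := (Real.sqrt nψ)⁻¹ with hrψ
  set rφ : ℝ := (Real.sqrt nφ)⁻¹ with hrφ
  have hrψsq : rψ ^ 2 = nψ⁻¹ := by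
    rw [hrψ, ← Real.sqrt_inv, Real.sq_sqrt (by positivity)]
  have hrφsq : rφ ^ 2 = nφ⁻¹ := by
    rw [hrφ, ← Real.sqrt_inv, Real.sq_sqrt (by positivity)]
  refine ⟨fun i => (rψ : ℂ) * ψ i, fun k => (rφ : ℂ) * φ k, ?_, ?_, ?_⟩
  · have : star (fun i => (rψ : ℂ) * ψ i) ⬝ᵥ (fun i => (rψ : ℂ) * ψ i)
        = ((rψ : ℂ)) ^ 2 * (star ψ ⬝ᵥ ψ) := by
      simp only [dotProduct, Pi.star_apply, RCLike.star_def, _root_.map_mul,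
        Complex.conj_ofReal, Finset.mul_sum]
      apply Finset.sum_congr rfl
      intro i _
      ring
    rw [this, hψdot]
    rw [show ((rψ : ℂ)) ^ 2 = ((rψ ^ 2 : ℝ) : ℂ) from by push_cast; ring, hrψsq]
    rw [← Complex.ofReal_mul]
    rw [inv_mul_cancel₀ (ne_of_gt hnψpos)]
    simp
  · have : star (fun k => (rφ : ℂ) * φ k) ⬝ᵥ (fun k => (rφ : ℂ) * φ k)
        = ((rφ : ℂ)) ^ 2 * (star φ ⬝ᵥ φ) := by
      simp only [dotProduct, Pi.star_apply, RCLike.star_def, _root_.map_mul,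
        Complex.conj_ofReal, Finset.mul_sum]
      apply Finset.sum_congr rfl
      intro k _
      ring
    rw [this, hφdot]
    rw [show ((rφ : ℂ)) ^ 2 = ((rφ ^ 2 : ℝ) : ℂ) from by push_cast; ring, hrφsq]
    rw [← Complex.ofReal_mul]
    rw [inv_mul_cancel₀ (ne_of_gt hnφpos)]
    simp
  · have hfac1 : ((rψ : ℂ)) ^ 2 * ((rφ : ℂ)) ^ 2 = 1 := by
      rw [show ((rψ : ℂ)) ^ 2 = ((rψ ^ 2 : ℝ) : ℂ) from by push_cast; ring,
        show ((rφ : ℂ)) ^ 2 = ((rφ ^ 2 : ℝ) : ℂ) from by push_cast; ring,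
        hrψsq, hrφsq, ← Complex.ofReal_mul, ← mul_inv, hnn]
      simp
    ext p q
    obtain ⟨i, k⟩ := p
    obtain ⟨j, l⟩ := q
    simp only [Matrix.vecMulVec_apply, Matrix.kroneckerMap_apply, Pi.star_apply,
      RCLike.star_def, _root_.map_mul, Complex.conj_ofReal]
    rw [hfact i k, hfact j l]
    simp only [_root_.map_mul]
    linear_combination (-(ψ i * φ k * ((starRingEnd ℂ) (ψ j)) * ((starRingEnd ℂ) (φ l)))) * hfac1


end SchmidtAux

open SchmidtAux in
/-- A bipartite state is a separable pure state if and only if its multiset of operator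
Schmidt coefficients is {1, 0, 0, …, 0}. -/
theorem stmt4_separable_pure_iff_schmidt_coefficients {NA NB : ℕ} (hA : 2 ≤ NA) (hB : 2 ≤ NB)
    (ρ : Matrix (Fin NA × Fin NB) (Fin NA × Fin NB) ℂ) (hρ : IsDensity ρ) :
    (∃ (ψA : Fin NA → ℂ) (ψB : Fin NB → ℂ),
        star ψA ⬝ᵥ ψA = 1 ∧ star ψB ⬝ᵥ ψB = 1 ∧
        ρ = Matrix.vecMulVec ψA (star ψA) ⊗ₖ Matrix.vecMulVec ψB (star ψB))
    ↔ (∀ (μ : Fin (min (NA ^ 2) (NB ^ 2)) → ℝ)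
         (E : Fin (min (NA ^ 2) (NB ^ 2)) → Matrix (Fin NA) (Fin NA) ℂ)
         (F : Fin (min (NA ^ 2) (NB ^ 2)) → Matrix (Fin NB) (Fin NB) ℂ),
         SchmidtDecomp ρ μ E F →
         Multiset.map μ Finset.univ.val
           = (1 : ℝ) ::ₘ Multiset.replicate (min (NA ^ 2) (NB ^ 2) - 1) (0 : ℝ)) := by
  constructor
  · rintro ⟨ψA, ψB, h1, h2, h3⟩ μ E F hdec
    rw [h3] at hdec
    obtain ⟨a₀, ha₀, ha0⟩ := forward_core ψA ψB h1 h2 μ E F hdec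
    exact map_indicator_multiset μ a₀ ha₀ ha0
  · intro H
    classical
    -- realignment matrix
    set R : Matrix (Fin NA × Fin NA) (Fin NB × Fin NB) ℂ :=
      Matrix.of (fun p q => ρ (p.1, q.1) (p.2, q.2)) with hRdef
    have hcardA : Fintype.card (Fin NA × Fin NA) = NA ^ 2 := by
      simp [Fintype.card_prod, pow_two]
    have hcardB : Fintype.card (Fin NB × Fin NB) = NB ^ 2 := by
      simp [Fintype.card_prod, pow_two]
    obtain ⟨μ, u, v, hμ0, hu, hv, hR⟩ := svd_exists R (min (NA ^ 2) (NB ^ 2))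
      (by rw [hcardA]; exact min_le_left _ _)
      (by rw [hcardB]; exact min_le_right _ _)
      (by rw [hcardA, hcardB])
    set E : Fin (min (NA ^ 2) (NB ^ 2)) → Matrix (Fin NA) (Fin NA) ℂ :=
      fun a => Matrix.of (fun i j => u a (i, j)) with hE
    set F : Fin (min (NA ^ 2) (NB ^ 2)) → Matrix (Fin NB) (Fin NB) ℂ :=
      fun a => Matrix.of (fun k l => (starRingEnd ℂ) (v a (k, l))) with hF
    have hEorth : ∀ a b, hsInner (E a) (E b) = if a = b then 1 else 0 := by
      intro a b
      rw [hsInner_eq_sum, ← hu a b]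
      apply Finset.sum_congr rfl
      intro p _
      rfl
    have hForth : ∀ a b, hsInner (F a) (F b) = if a = b then 1 else 0 := by
      intro a b
      rw [hsInner_eq_sum]
      calc ∑ p : Fin NB × Fin NB,
              (starRingEnd ℂ) (F a p.1 p.2) * F b p.1 p.2
          = (starRingEnd ℂ) (star (v a) ⬝ᵥ v b) := by
            rw [dotProduct, map_sum]
            apply Finset.sum_congr rfl
            intro p _
            simp only [hF, Matrix.of_apply, Pi.star_apply, RCLike.star_def,
              _root_.map_mul, Complex.conj_conj]
        _ = if a = b then 1 else 0 := by
            rw [hv a b]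
            by_cases h : a = b <;> simp [h]
    have hdec : SchmidtDecomp ρ μ E F := by
      refine ⟨hμ0, hEorth, hForth, ?_⟩
      ext pq rs
      obtain ⟨i, k⟩ := pq
      obtain ⟨j, l⟩ := rs
      have hRel := congrFun (congrFun hR (i, j)) (k, l)
      have hlhs : ρ (i, k) (j, l) = R (i, j) (k, l) := rfl
      rw [hlhs, hRel, Matrix.sum_apply]
      rw [Matrix.sum_apply]
      apply Finset.sum_congr rfl
      intro a _
      simp only [Matrix.smul_apply, Matrix.vecMulVec_apply, Matrix.kroneckerMap_apply,
        Pi.star_apply, Matrix.of_apply, smul_eq_mul, hE, hF, RCLike.star_def]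
    have hmul := H μ E F hdec
    obtain ⟨a₀, ha₀, ha0⟩ := indicator_of_multiset μ hmul
    have hsingle : ρ = E a₀ ⊗ₖ F a₀ := by
      rw [hdec.2.2.2]
      rw [Finset.sum_eq_single a₀]
      · rw [ha₀]; simp
      · intro b _ hb
        rw [ha0 b hb]
        simp
      · intro hb
        exact absurd (Finset.mem_univ a₀) hb
    have hhs : hsInner ρ ρ = 1 := by
      rw [hsingle, hsInner_kronecker, hEorth a₀ a₀, hForth a₀ a₀]
      simp
    obtain ⟨w, hw1, hw2⟩ := pure_of_psd ρ hρ.1 hρ.2 hhs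
    obtain ⟨ψA, ψB, hA1, hB1, hprod⟩ := product_of_pure w hw1 (E a₀) (F a₀)
      (by rw [← hw2, hsingle])
    exact ⟨ψA, ψB, hA1, hB1, by rw [hw2]; exact hprod⟩
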